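/- Let G be a group acting on a set of data, and for each datum X let L(X) = E_{τ, g₀ ~ P₀, g̃₁ ~ P_X} ‖v_X(h_X(τ)) − ∂/∂τ h_X(τ)‖²_F be the flow-matching loss, where h_X is the equivariant path generated by g₀ and g̃₁. Assume P₀ is right-SO(3)^N-invariant, P_X is SO(3)^N-equivariant ((R_{r⁻¹})_# P_X = P_{rX}), the path construction is equivariant (h_{rX} generated by g₀r⁻¹, g̃₁r⁻¹ equals R_{r⁻¹} ∘ h_X), v_X is R_{r⁻¹}-related to v_{rX}, and the differentials of right translations are isometries. Then L(X) = L(rX) for all r ∈ SO(3)^N. -/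

import Mathlib

open MeasureTheory

/-- first part of Prop. 5, data efficiency: Let `G = SE(3)^N` act on data,
`r ∈ SO(3)^N ⊆ G`, and let
`L(X) = E_{τ, g₀ ~ P₀, g̃₁ ~ P_X} ‖v_X (h_X τ g₀ g̃₁) − ∂/∂τ h_X τ g₀ g̃₁‖²`
be the flow-matching loss, the velocity `dh X τ g₀ g̃₁` being the path derivative.
Assume: `P₀` is right-invariant under `r`; `P_X` is equivariant
(`(R_{r⁻¹})_# P_X = P_{r X}`); the path construction is equivariant
(`h_{rX}` generated from `g₀ r⁻¹, g̃₁ r⁻¹` equals `R_{r⁻¹} ∘ h_X`, and likewise for its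
velocity via the differential `D = (R_{r⁻¹})_*`); `v_X` is `R_{r⁻¹}`-related to `v_{rX}`;
and `D` is a linear isometry.  Then `L(X) = L(r X)`. -/
theorem loss_rotation_invariance
    {G : Type*} [Group G] [MeasurableSpace G] [MeasurableMul G]
    {PC : Type*} [MulAction G PC]
    {E : Type*} [NormedAddCommGroup E] [NormedSpace ℝ E]
    (r : G) (X : PC)
    (P₀ : Measure G) [IsProbabilityMeasure P₀]
    (PX : PC → Measure G) [∀ Y, IsProbabilityMeasure (PX Y)]
    (μτ : Measure ℝ) [IsProbabilityMeasure μτ]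
    (h : PC → ℝ → G → G → G) (dh : PC → ℝ → G → G → E) (v : PC → G → E)
    (D : E ≃ₗᵢ[ℝ] E)
    (hP₀ : Measure.map (fun g => g * r⁻¹) P₀ = P₀)
    (hPX : Measure.map (fun g => g * r⁻¹) (PX X) = PX (r • X))
    (hpath : ∀ τ g₀ g₁, h (r • X) τ (g₀ * r⁻¹) (g₁ * r⁻¹) = h X τ g₀ g₁ * r⁻¹)
    (hvel : ∀ τ g₀ g₁, dh (r • X) τ (g₀ * r⁻¹) (g₁ * r⁻¹) = D (dh X τ g₀ g₁))
    (hrel : ∀ g, v (r • X) (g * r⁻¹) = D (v X g))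
    (hmeas : ∀ Y : PC, Measurable (fun p : ℝ × G × G =>
      ‖v Y (h Y p.1 p.2.1 p.2.2) - dh Y p.1 p.2.1 p.2.2‖ ^ 2)) :
    ∫ p : ℝ × G × G, ‖v X (h X p.1 p.2.1 p.2.2) - dh X p.1 p.2.1 p.2.2‖ ^ 2
        ∂(μτ.prod (P₀.prod (PX X))) =
    ∫ p : ℝ × G × G,
        ‖v (r • X) (h (r • X) p.1 p.2.1 p.2.2) - dh (r • X) p.1 p.2.1 p.2.2‖ ^ 2
        ∂(μτ.prod (P₀.prod (PX (r • X)))) := by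
  have hmul : Measurable (fun g : G => g * r⁻¹) := measurable_mul_const r⁻¹
  have hT : Measurable (fun p : ℝ × G × G => (p.1, p.2.1 * r⁻¹, p.2.2 * r⁻¹)) :=
    measurable_fst.prodMk
      ((hmul.comp (measurable_fst.comp measurable_snd)).prodMk
        (hmul.comp (measurable_snd.comp measurable_snd)))
  have hmap : Measure.map (fun p : ℝ × G × G => (p.1, p.2.1 * r⁻¹, p.2.2 * r⁻¹))
      (μτ.prod (P₀.prod (PX X))) = μτ.prod (P₀.prod (PX (r • X))) := by
    have h2 : Measure.map (Prod.map (fun g : G => g * r⁻¹) (fun g : G => g * r⁻¹))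
        (P₀.prod (PX X)) = P₀.prod (PX (r • X)) := by
      rw [← Measure.map_prod_map _ _ hmul hmul, hP₀, hPX]
    have h1 : Measure.map (Prod.map (id : ℝ → ℝ)
        (Prod.map (fun g : G => g * r⁻¹) (fun g : G => g * r⁻¹)))
        (μτ.prod (P₀.prod (PX X))) = μτ.prod (P₀.prod (PX (r • X))) := by
      rw [← h2, ← Measure.map_prod_map _ _ measurable_id (hmul.prodMap hmul),
        Measure.map_id]
    exact h1
  rw [← hmap, integral_map hT.aemeasurable
    ((hmeas (r • X)).aestronglyMeasurable)]
  congr 1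
  ext p
  simp only [hpath, hvel, hrel]
  rw [← D.map_sub, D.norm_map]
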